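/- If an online algorithm never returns to A₀ during the anchor phase then its cost is large: let A₀ have minimum pairwise distance ℓ > 0 and let a lazy online algorithm serve ρσ from A₀, where σ = (x₁⋯x_k)^m is the round-robin over A₀ = {x₁,…,x_k}. If the algorithm's configuration at the end of round |ρσ| is not A₀, then its total cost on ρσ is at least m·ℓ. -/

import Mathlib

open Finset

variable {V : Type*}

/-- Matching distance between two finite configurations: the infimum over
bijections `f : X ≃ Y` of the total distance moved. -/
noncomputable def matchDist [MetricSpace V] (X Y : Finset V) : ℝ :=
  sInf { c | ∃ f : (X : Type _) ≃ (Y : Type _), c = ∑ x : X, dist (x : V) ((f x : V)) }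

/-- Total movement cost of a schedule of configurations. -/
noncomputable def schedCost [MetricSpace V] {n : ℕ} (C : Fin (n + 1) → Finset V) : ℝ :=
  ∑ i : Fin n, matchDist (C i.castSucc) (C i.succ)

/-- `C` is a schedule of `k`-configurations serving the request sequence `ρ`
starting from `A₀`. -/
def Serves (k : ℕ) (A₀ : Finset V) (ρ : List V) (C : Fin (ρ.length + 1) → Finset V) : Prop :=
  C 0 = A₀ ∧ (∀ i, (C i).card = k) ∧ ∀ i : Fin ρ.length, ρ.get i ∈ C i.succ

/-- The work function: the cheapest cost to serve `ρ` from `A₀` and end in `X`. -/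
noncomputable def workFn [MetricSpace V] (k : ℕ) (A₀ : Finset V) (ρ : List V)
    (X : Finset V) : ℝ :=
  sInf { c | ∃ C : Fin (ρ.length + 1) → Finset V,
    Serves k A₀ ρ C ∧ C (Fin.last _) = X ∧ c = schedCost C }

/-- The optimal cost of serving `ρ` from `A₀`. -/
noncomputable def OPTcost [MetricSpace V] (k : ℕ) (A₀ : Finset V) (ρ : List V) : ℝ :=
  sInf { c | ∃ X : Finset V, X.card = k ∧ c = workFn k A₀ ρ X }

/-- A lazy schedule: each round, at most one server moves, onto the current request. -/
def IsLazy [DecidableEq V] (ρ : List V) (C : Fin (ρ.length + 1) → Finset V) : Prop :=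
  ∀ i : Fin ρ.length, ∃ x ∈ C i.castSucc,
    C i.succ = insert (ρ.get i) ((C i.castSucc).erase x)


lemma matchDist_nonneg [MetricSpace V] (X Y : Finset V) : 0 ≤ matchDist X Y := by
  apply Real.sInf_nonneg
  rintro c ⟨f, rfl⟩
  exact Finset.sum_nonneg fun _ _ => dist_nonneg

lemma dist_le_matchDist [MetricSpace V] [DecidableEq V] {X : Finset V} {x r : V}
    (hx : x ∈ X) (hr : r ∉ X) :
    dist x r ≤ matchDist X (insert r (X.erase x)) := by
  set Y := insert r (X.erase x) with hY
  have hrY : r ∉ X.erase x := fun h => hr (Finset.mem_of_mem_erase h)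
  have hcard : Y.card = X.card := by
    rw [hY, Finset.card_insert_of_notMem hrY, Finset.card_erase_of_mem hx]
    have : 1 ≤ X.card := Finset.card_pos.mpr ⟨x, hx⟩
    omega
  have hne : Nonempty ((X : Type _) ≃ (Y : Type _)) := by
    have : Fintype.card X = Fintype.card Y := by simpa [Fintype.card_coe] using hcard.symm
    exact ⟨Fintype.equivOfCardEq this⟩
  apply le_csInf
  · obtain ⟨f⟩ := hne
    exact ⟨_, f, rfl⟩
  rintro c ⟨f, rfl⟩
  have key : ∀ b : X, dist (b:V) r - dist ((f b : V)) r ≤ dist (b:V) ((f b : V)) := by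
    intro b
    have := dist_triangle (b:V) ((f b : V)) r
    linarith
  have h1 : ∑ b : X, (dist (b:V) r - dist ((f b : V)) r) ≤ ∑ b : X, dist (b:V) ((f b : V)) :=
    Finset.sum_le_sum fun b _ => key b
  have h2 : ∑ b : X, dist ((f b : V)) r = ∑ y : Y, dist (y:V) r :=
    Equiv.sum_comp f (fun y => dist (y:V) r)
  have h3 : ∑ b : X, dist (b:V) r = ∑ b ∈ X, dist b r := Finset.sum_coe_sort X (fun b => dist b r)
  have h4 : ∑ y : Y, dist (y:V) r = ∑ y ∈ Y, dist y r := Finset.sum_coe_sort Y (fun y => dist y r)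
  have h5 : ∑ b ∈ X, dist b r = dist x r + ∑ b ∈ X.erase x, dist b r :=
    (Finset.add_sum_erase X (fun b => dist b r) hx).symm
  have h6 : ∑ y ∈ Y, dist y r = ∑ b ∈ X.erase x, dist b r := by
    rw [hY, Finset.sum_insert hrY, dist_self, zero_add]
  rw [Finset.sum_sub_distrib, h2, h3, h4, h5, h6] at h1
  linarith

lemma flatten_replicate_length' {k m : ℕ} (a : Fin k → V) :
    (List.flatten (List.replicate m (List.ofFn a))).length = m * k := by
  simp [List.length_flatten]

lemma flatten_replicate_get' {k : ℕ} (a : Fin k → V) :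
    ∀ (m j t : ℕ) (_ : j < m) (ht : t < k)
      (hlen : j * k + t < (List.flatten (List.replicate m (List.ofFn a))).length),
    (List.flatten (List.replicate m (List.ofFn a)))[j * k + t]'hlen = a ⟨t, ht⟩ := by
  intro m
  induction m with
  | zero => omega
  | succ m ih =>
    intro j t hj ht hlen
    have e : List.flatten (List.replicate (m+1) (List.ofFn a))
        = List.ofFn a ++ List.flatten (List.replicate m (List.ofFn a)) := by
      rw [List.replicate_succ, List.flatten_cons]
    rw [List.getElem_of_eq e]
    rcases Nat.eq_zero_or_pos j with hj0 | hj0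
    · subst hj0
      rw [List.getElem_append_left (by simpa using ht)]
      simp
    · have hk : (List.ofFn a).length ≤ j * k + t := by
        simp only [List.length_ofFn]
        exact le_trans (Nat.le_mul_of_pos_left k hj0) (Nat.le_add_right _ _)
      rw [List.getElem_append_right hk]
      have hidx : j * k + t - (List.ofFn a).length = (j-1) * k + t := by
        simp only [List.length_ofFn]
        have : j * k = (j-1)*k + k := by
          rcases j with _|j'
          · omega
          · simp [Nat.succ_sub_one, Nat.succ_mul]
        omega
      have hlen2 : (j-1) * k + t < (List.flatten (List.replicate m (List.ofFn a))).length := by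
        rw [flatten_replicate_length']
        calc (j-1)*k+t < (j-1)*k+k := by omega
          _ = (j-1+1)*k := by ring
          _ ≤ m*k := Nat.mul_le_mul_right k (by omega)
      have goal2 := ih (j-1) t (by omega) ht hlen2
      convert goal2 using 2

lemma cycle_index_inj {n k : ℕ} {j1 j2 v : ℕ}
    (h1 : n + j1*k ≤ v) (h2 : v < n + j1*k + k)
    (h3 : n + j2*k ≤ v) (h4 : v < n + j2*k + k) : j1 = j2 := by
  rcases lt_trichotomy j1 j2 with h|h|h
  · exfalso
    have := Nat.mul_le_mul_right k (Nat.succ_le_of_lt h)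
    rw [Nat.succ_mul] at this
    omega
  · exact h
  · exfalso
    have := Nat.mul_le_mul_right k (Nat.succ_le_of_lt h)
    rw [Nat.succ_mul] at this
    omega


/-- a lazy online algorithm that does not end the anchor phase in
`A₀` pays at least `m * ℓ` on `ρσ`. -/
theorem lazy_not_home_expensive [MetricSpace V] [DecidableEq V]
    (k m : ℕ) (hk : 0 < k) (a : Fin k → V) (ha : Function.Injective a)
    (A₀ : Finset V) (hA₀ : A₀ = Finset.image a Finset.univ)
    (ℓ : ℝ) (hℓ : 0 < ℓ)
    (hℓle : ∀ i j : Fin k, i ≠ j → ℓ ≤ dist (a i) (a j))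
    (ρ : List V)
    (σ : List V) (hσ : σ = List.flatten (List.replicate m (List.ofFn a)))
    (C : Fin ((ρ ++ σ).length + 1) → Finset V)
    (hserve : Serves k A₀ (ρ ++ σ) C) (hlazy : IsLazy (ρ ++ σ) C)
    (hend : C (Fin.last _) ≠ A₀) :
    (m : ℝ) * ℓ ≤ schedCost C := by
  obtain ⟨hC0, hcard, hserveq⟩ := hserve
  have hσlen : σ.length = m * k := by rw [hσ]; exact flatten_replicate_length' a
  have hL : (ρ ++ σ).length = ρ.length + m * k := by rw [List.length_append, hσlen]
  have hcardA : A₀.card = k := by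
    rw [hA₀, Finset.card_image_of_injective _ ha]
    simp
  -- all σ-requests lie in A₀
  have hallσ : ∀ y ∈ σ, y ∈ A₀ := by
    intro y hy
    rw [hσ, List.mem_flatten] at hy
    obtain ⟨l, hl, hxl⟩ := hy
    rw [List.mem_replicate] at hl
    rw [hl.2, List.mem_ofFn] at hxl
    obtain ⟨z, hz⟩ := hxl
    rw [hA₀]
    exact Finset.mem_image.mpr ⟨z, Finset.mem_univ z, hz⟩
  have hmem : ∀ (i : Fin (ρ ++ σ).length), ρ.length ≤ i.val → (ρ ++ σ).get i ∈ A₀ := by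
    intro i hi
    rw [List.get_eq_getElem, List.getElem_append_right hi]
    exact hallσ _ (List.getElem_mem _)
  -- the request at position n + j*k + t is a t
  have hreq : ∀ (j t : ℕ) (_ : j < m) (ht : t < k)
      (h : ρ.length + j*k + t < (ρ ++ σ).length),
      (ρ ++ σ)[ρ.length + j*k + t]'h = a ⟨t, ht⟩ := by
    intro j t hj ht h
    rw [List.getElem_append_right (by omega)]
    rw [List.getElem_of_eq hσ]
    have h2 : j*k + t < (List.flatten (List.replicate m (List.ofFn a))).length := by
      rw [flatten_replicate_length']
      calc j*k+t < j*k+k := by omega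
        _ = (j+1)*k := by ring
        _ ≤ m*k := Nat.mul_le_mul_right k hj
    have hfr := flatten_replicate_get' a m j t hj ht h2
    convert hfr using 2
    omega
  -- a lazy step from A₀ with a request in A₀ stays in A₀
  have hstep : ∀ i : Fin (ρ ++ σ).length,
      (ρ ++ σ).get i ∈ A₀ → C i.castSucc = A₀ → C i.succ = A₀ := by
    intro i hrA hCA
    obtain ⟨x, hxmem, heq⟩ := hlazy i
    rw [hCA] at hxmem heq
    by_cases hrx : (ρ ++ σ).get i ∈ A₀.erase x
    · exfalso
      have hc := hcard i.succ
      rw [heq, Finset.insert_eq_self.mpr hrx, Finset.card_erase_of_mem hxmem, hcardA] at hc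
      omega
    · have hxr : x = (ρ ++ σ).get i := by
        by_contra hne
        exact hrx (Finset.mem_erase.mpr ⟨fun h => hne h.symm, hrA⟩)
      rw [heq, ← hxr, Finset.insert_erase hxmem]
  -- the configuration is never A₀ from round |ρ| on
  have hnot : ∀ (t : ℕ) (h1 : ρ.length ≤ t) (h2 : t ≤ (ρ ++ σ).length),
      C ⟨t, by omega⟩ ≠ A₀ := by
    intro t h1 h2 hCA
    have grow : ∀ d (hd : t + d ≤ (ρ ++ σ).length), C ⟨t + d, by omega⟩ = A₀ := by
      intro d
      induction d with
      | zero => intro _; exact hCA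
      | succ d ih =>
        intro hd
        have hlt : t + d < (ρ ++ σ).length := by omega
        exact hstep ⟨t + d, hlt⟩ (hmem ⟨t + d, hlt⟩ (by show ρ.length ≤ t + d; omega))
          (ih (by omega))
    apply hend
    have hfin : (Fin.last (ρ ++ σ).length)
        = (⟨t + ((ρ ++ σ).length - t), by omega⟩ : Fin ((ρ ++ σ).length + 1)) := by
      apply Fin.ext
      show (ρ ++ σ).length = t + ((ρ ++ σ).length - t)
      omega
    rw [hfin]
    exact grow ((ρ ++ σ).length - t) (by omega)
  -- in each cycle there is an expensive step
  have hcycle : ∀ j : Fin m, ∃ i : Fin (ρ ++ σ).length,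
      (ρ.length + j.val*k ≤ i.val ∧ i.val < ρ.length + j.val*k + k) ∧
      ℓ ≤ matchDist (C i.castSucc) (C i.succ) := by
    intro j
    by_contra hcon
    push_neg at hcon
    have hjk : j.val * k + k ≤ m * k := by
      have h := Nat.mul_le_mul_right k (Nat.succ_le_of_lt j.isLt)
      rw [Nat.succ_mul] at h
      omega
    have key : ∀ (t : ℕ) (ht : t ≤ k) (hidx : ρ.length + j.val*k + t ≤ (ρ ++ σ).length),
        ∀ i' : Fin k, i'.val < t → a i' ∈ C ⟨ρ.length + j.val*k + t, by omega⟩ := by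
      intro t
      induction t with
      | zero => intro _ _ i' h; omega
      | succ t ih =>
        intro ht hidx i' hi'
        have hti : ρ.length + j.val*k + t < (ρ ++ σ).length := by omega
        set i : Fin (ρ ++ σ).length := ⟨ρ.length + j.val*k + t, hti⟩ with hidef
        obtain ⟨x, hxmem, heq⟩ := hlazy i
        have hr : (ρ ++ σ).get i = a ⟨t, by omega⟩ := by
          rw [List.get_eq_getElem]
          exact hreq j.val t j.isLt (by omega) hti
        have hcheap : x ∉ A₀ ∨ x = (ρ ++ σ).get i := by
          by_contra hcon2
          push_neg at hcon2
          obtain ⟨hxA, hxr⟩ := hcon2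
          have hrnot : (ρ ++ σ).get i ∉ C i.castSucc := by
            intro hrmem
            have hc := hcard i.succ
            have hrx : (ρ ++ σ).get i ∈ (C i.castSucc).erase x :=
              Finset.mem_erase.mpr ⟨fun h => hxr h.symm, hrmem⟩
            rw [heq, Finset.insert_eq_self.mpr hrx, Finset.card_erase_of_mem hxmem,
              hcard i.castSucc] at hc
            omega
          have hdd : dist x ((ρ ++ σ).get i) ≤ matchDist (C i.castSucc) (C i.succ) := by
            rw [heq]
            exact dist_le_matchDist hxmem hrnot
          obtain ⟨i'', _, hxa⟩ := Finset.mem_image.mp (hA₀ ▸ hxA)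
          have hne2 : i'' ≠ ⟨t, by omega⟩ := by
            intro hh
            apply hxr
            rw [hr, ← hxa, hh]
          have hld := hℓle i'' ⟨t, by omega⟩ hne2
          rw [hxa, ← hr] at hld
          have hb := hcon i ⟨by show ρ.length + j.val*k ≤ ρ.length + j.val*k + t; omega,
            by show ρ.length + j.val*k + t < ρ.length + j.val*k + k; omega⟩
          linarith
        rcases Nat.lt_or_ge i'.val t with hlt | hge
        · have hmem' : a i' ∈ C i.castSucc := ih (by omega) (by omega) i' hlt
          have hax : a i' ≠ x := by
            rcases hcheap with hxA | hxr
            · intro hh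
              apply hxA
              rw [← hh, hA₀]
              exact Finset.mem_image.mpr ⟨i', Finset.mem_univ i', rfl⟩
            · intro hh
              rw [hxr, hr] at hh
              have hvv : i'.val = t := by rw [ha hh]
              omega
          have hmm : a i' ∈ (C i.castSucc).erase x := Finset.mem_erase.mpr ⟨hax, hmem'⟩
          show a i' ∈ C i.succ
          rw [heq]
          exact Finset.mem_insert_of_mem hmm
        · have hvt : i'.val = t := by omega
          show a i' ∈ C i.succ
          rw [heq]
          have hav : a i' = (ρ ++ σ).get i := by
            rw [hr]
            congr 1
            exact Fin.ext hvt
          rw [hav]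
          exact Finset.mem_insert_self _ _
    have hsub : A₀ ⊆ C ⟨ρ.length + j.val*k + k, by omega⟩ := by
      intro y hy
      obtain ⟨i', _, rfl⟩ := Finset.mem_image.mp (hA₀ ▸ hy)
      exact key k le_rfl (by omega) i' i'.isLt
    have heqA : C ⟨ρ.length + j.val*k + k, by omega⟩ = A₀ :=
      (Finset.eq_of_subset_of_card_le hsub (le_of_eq (by rw [hcard, hcardA]))).symm
    exact hnot _ (by omega) (by omega) heqA
  -- sum up
  choose I hIa hIb using hcycle
  have hinj : Function.Injective I := by
    intro j1 j2 h
    have h1 := hIa j1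
    have h2 := hIa j2
    rw [h] at h1
    apply Fin.ext
    exact cycle_index_inj h1.1 h1.2 h2.1 h2.2
  have hgnonneg : ∀ i : Fin (ρ ++ σ).length,
      0 ≤ matchDist (C i.castSucc) (C i.succ) := fun i => matchDist_nonneg _ _
  calc (m : ℝ) * ℓ = ∑ _j : Fin m, ℓ := by simp
    _ ≤ ∑ j : Fin m, matchDist (C (I j).castSucc) (C (I j).succ) :=
        Finset.sum_le_sum fun j _ => hIb j
    _ = ∑ i ∈ Finset.image I Finset.univ, matchDist (C i.castSucc) (C i.succ) := by
        rw [Finset.sum_image (fun j1 _ j2 _ h => hinj h)]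
    _ ≤ ∑ i : Fin (ρ ++ σ).length, matchDist (C i.castSucc) (C i.succ) :=
        Finset.sum_le_sum_of_subset_of_nonneg (Finset.subset_univ _)
          (fun i _ _ => hgnonneg i)
    _ = schedCost C := rfl
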